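/- Let λ_i, λ > 0 with λ_i ≥ λ. Then for any T > 0, ∫₀^T e^{-λ_i (T - s)} e^{-λ s} s^{-1/2} ds ≤ e^{-λ T / 2} (∫₀^T e^{-λ_i (T-s)/2} ds) · (1/T) ∫₀^T s^{-1/2} e^{-λ s / 2} ds, and consequently there exists a constant c > 0 (depending only on λ) such that ∫₀^T e^{-λ_i(T-s)} e^{-λ s} s^{-1/2} ds ≤ (c/λ_i) e^{-λ T/2} T^{-1/2} for all T > 0 and all λ_i ≥ λ. -/

import Mathlib

open MeasureTheory Set


lemma fkg_aux {μ : Measure ℝ} [IsFiniteMeasure μ] {f g : ℝ → ℝ}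
    (hf : Integrable f μ) (hg : Integrable g μ)
    (hfg : Integrable (fun s => f s * g s) μ)
    (h : ∀ᵐ s ∂μ, ∀ᵐ t ∂μ, (f s - f t) * (g s - g t) ≤ 0) :
    (μ Set.univ).toReal * ∫ s, f s * g s ∂μ ≤ (∫ s, f s ∂μ) * ∫ s, g s ∂μ := by
  set M := (μ Set.univ).toReal with hM
  set IF := ∫ s, f s ∂μ with hIF
  set IG := ∫ s, g s ∂μ with hIG
  set IFG := ∫ s, f s * g s ∂μ with hIFG
  have inner_eq : ∀ s, (∫ t, (f s - f t) * (g s - g t) ∂μ)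
      = f s * g s * M - f s * IG - IF * g s + IFG := by
    intro s
    have h1 : Integrable (fun _ : ℝ => f s * g s) μ := integrable_const _
    have h2 : Integrable (fun t => f s * g t) μ := hg.const_mul _
    have h3 : Integrable (fun t => f t * g s) μ := hf.mul_const _
    have h11 : Integrable (fun t => f s * g s - f s * g t) μ := h1.sub h2
    have h12 : Integrable (fun t => f s * g s - f s * g t - f t * g s) μ := h11.sub h3
    have e : (fun t => (f s - f t) * (g s - g t))
        = fun t => f s * g s - f s * g t - f t * g s + f t * g t := by
      funext t; ring
    rw [e, integral_add h12 hfg, integral_sub h11 h3, integral_sub h1 h2,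
      integral_const, integral_const_mul _ _, integral_mul_const _ _]
    simp only [smul_eq_mul, measureReal_def, ← hM, ← hIF, ← hIG, ← hIFG]
    ring
  have hle : (∫ s, (f s * g s * M - f s * IG - IF * g s + IFG) ∂μ) ≤ 0 := by
    apply integral_nonpos_of_ae
    filter_upwards [h] with s hs
    rw [← inner_eq s]
    exact integral_nonpos_of_ae hs
  have k1 : Integrable (fun s => f s * g s * M - f s * IG) μ :=
    (hfg.mul_const M).sub (hf.mul_const IG)
  have k2 : Integrable (fun s => f s * g s * M - f s * IG - IF * g s) μ :=
    k1.sub (hg.const_mul IF)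
  have houter : (∫ s, (f s * g s * M - f s * IG - IF * g s + IFG) ∂μ)
      = IFG * M - IF * IG - IF * IG + IFG * M := by
    rw [integral_add k2 (integrable_const _), integral_sub k1 (hg.const_mul IF),
      integral_sub (hfg.mul_const M) (hf.mul_const IG),
      integral_const, integral_mul_const _ _, integral_mul_const _ _, integral_const_mul _ _]
    simp only [smul_eq_mul, measureReal_def, ← hM, ← hIF, ← hIG, ← hIFG]
    ring
  rw [houter] at hle
  linarith

lemma key (lam lami T : ℝ) (hlam : 0 < lam) (hli : lam ≤ lami) (hT : 0 < T) :
    ((∫ s in Ioc (0:ℝ) T,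
          Real.exp (-(lami * (T - s))) * Real.exp (-(lam * s)) * s ^ (-(1/2 : ℝ)))
        ≤ Real.exp (-(lam * T) / 2) *
            (∫ s in Ioc (0:ℝ) T, Real.exp (-(lami * (T - s)) / 2)) *
            ((1/T) * ∫ s in Ioc (0:ℝ) T, s ^ (-(1/2 : ℝ)) * Real.exp (-(lam * s) / 2)))
    ∧ (∫ s in Ioc (0:ℝ) T, Real.exp (-(lami * (T - s)) / 2)) ≤ 2 / lami
    ∧ (0:ℝ) ≤ ∫ s in Ioc (0:ℝ) T, Real.exp (-(lami * (T - s)) / 2)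
    ∧ (∫ s in Ioc (0:ℝ) T, s ^ (-(1/2 : ℝ)) * Real.exp (-(lam * s) / 2)) ≤ 2 * T ^ ((1:ℝ)/2)
    ∧ (0:ℝ) ≤ ∫ s in Ioc (0:ℝ) T, s ^ (-(1/2 : ℝ)) * Real.exp (-(lam * s) / 2) := by
  have hlami : 0 < lami := lt_of_lt_of_le hlam hli
  set f : ℝ → ℝ := fun s => s ^ (-(1/2 : ℝ)) * Real.exp (-(lam * s) / 2) with hf_def
  set g : ℝ → ℝ := fun s => Real.exp (-(lami * (T - s)) / 2) with hg_def
  set μ : Measure ℝ := volume.restrict (Ioc 0 T) with hμ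
  haveI : IsFiniteMeasure μ := ⟨by
    rw [hμ, Measure.restrict_apply_univ, Real.volume_Ioc]; exact ENNReal.ofReal_lt_top⟩
  have hroot : Integrable (fun s : ℝ => s ^ (-(1/2 : ℝ))) μ :=
    (intervalIntegral.intervalIntegrable_rpow' (by norm_num)).1
  have mroot : Measurable (fun s : ℝ => s ^ (-(1/2 : ℝ))) := by fun_prop

  have hmemae : ∀ᵐ s ∂μ, s ∈ Ioc (0:ℝ) T := ae_restrict_mem measurableSet_Ioc
  have hgcont : Continuous g := by fun_prop
  have hgint : Integrable g μ := hgcont.integrableOn_Ioc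
  have hfmeas : AEStronglyMeasurable f μ :=
    (mroot.mul (by fun_prop : Measurable fun s : ℝ => Real.exp (-(lam * s) / 2))).aestronglyMeasurable
  have hfle : ∀ s ∈ Ioc (0:ℝ) T, f s ≤ s ^ (-(1/2 : ℝ)) := by
    intro s hs
    have h1 : Real.exp (-(lam * s) / 2) ≤ 1 :=
      Real.exp_le_one_iff.mpr (by nlinarith [hs.1])
    have h2 : (0:ℝ) ≤ s ^ (-(1/2 : ℝ)) := Real.rpow_nonneg hs.1.le _
    calc f s ≤ s ^ (-(1/2 : ℝ)) * 1 := mul_le_mul_of_nonneg_left h1 h2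
    _ = _ := mul_one _
  have hfnn : ∀ s ∈ Ioc (0:ℝ) T, 0 ≤ f s := fun s hs =>
    mul_nonneg (Real.rpow_nonneg hs.1.le _) (Real.exp_nonneg _)
  have hgnn : ∀ s : ℝ, 0 ≤ g s := fun s => Real.exp_nonneg _
  have hgle1 : ∀ s ∈ Ioc (0:ℝ) T, g s ≤ 1 := by
    intro s hs
    exact Real.exp_le_one_iff.mpr (by nlinarith [hs.2])
  have hfint : Integrable f μ := by
    refine hroot.mono' hfmeas ?_
    filter_upwards [hmemae] with s hs
    rw [Real.norm_eq_abs, abs_of_nonneg (hfnn s hs)]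
    exact hfle s hs
  have hfgint : Integrable (fun s => f s * g s) μ := by
    refine hroot.mono' (hfmeas.mul hgcont.aestronglyMeasurable) ?_
    filter_upwards [hmemae] with s hs
    rw [Real.norm_eq_abs, abs_of_nonneg (mul_nonneg (hfnn s hs) (hgnn s))]
    calc f s * g s ≤ f s * 1 := mul_le_mul_of_nonneg_left (hgle1 s hs) (hfnn s hs)
    _ = f s := mul_one _
    _ ≤ _ := hfle s hs
  -- monotonicity
  have hmono : ∀ s ∈ Ioc (0:ℝ) T, ∀ t ∈ Ioc (0:ℝ) T, s ≤ t → f t ≤ f s ∧ g s ≤ g t := by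
    intro s hs t ht hst
    constructor
    · have h1 : t ^ (-(1/2 : ℝ)) ≤ s ^ (-(1/2 : ℝ)) :=
        Real.rpow_le_rpow_of_nonpos hs.1 hst (by norm_num)
      have h2 : Real.exp (-(lam * t) / 2) ≤ Real.exp (-(lam * s) / 2) :=
        Real.exp_le_exp.mpr (by nlinarith)
      exact mul_le_mul h1 h2 (Real.exp_nonneg _) (Real.rpow_nonneg hs.1.le _)
    · exact Real.exp_le_exp.mpr (by nlinarith)
  have hae : ∀ᵐ s ∂μ, ∀ᵐ t ∂μ, (f s - f t) * (g s - g t) ≤ 0 := by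
    filter_upwards [hmemae] with s hs
    filter_upwards [hmemae] with t ht
    rcases le_total s t with h | h
    · have := hmono s hs t ht h
      exact mul_nonpos_of_nonneg_of_nonpos (by linarith [this.1]) (by linarith [this.2])
    · have := hmono t ht s hs h
      exact mul_nonpos_of_nonpos_of_nonneg (by linarith [this.1]) (by linarith [this.2])
  have hMT : (μ Set.univ).toReal = T := by
    rw [hμ, Measure.restrict_apply_univ, Real.volume_Ioc, sub_zero,
      ENNReal.toReal_ofReal hT.le]
  have hfkg := fkg_aux hfint hgint hfgint hae
  rw [hMT] at hfkg
  set IF := ∫ s, f s ∂μ with hIF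
  set IG := ∫ s, g s ∂μ with hIG
  have hIFnn : 0 ≤ IF := setIntegral_nonneg measurableSet_Ioc hfnn
  have hIGnn : 0 ≤ IG := setIntegral_nonneg measurableSet_Ioc (fun s _ => hgnn s)
  -- part 1
  have part1 : (∫ s in Ioc (0:ℝ) T,
        Real.exp (-(lami * (T - s))) * Real.exp (-(lam * s)) * s ^ (-(1/2 : ℝ)))
      ≤ Real.exp (-(lam * T) / 2) * IG * ((1/T) * IF) := by
    set E := Real.exp (-(lam * T) / 2) with hE
    have hlhsint : Integrable
        (fun s => Real.exp (-(lami * (T - s))) * Real.exp (-(lam * s)) * s ^ (-(1/2 : ℝ))) μ := by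
      refine hroot.mono' ?_ ?_
      · exact ((by fun_prop : Measurable fun s : ℝ =>
          Real.exp (-(lami * (T - s))) * Real.exp (-(lam * s))).mul mroot).aestronglyMeasurable
      · filter_upwards [hmemae] with s hs
        rw [Real.norm_eq_abs, abs_of_nonneg (mul_nonneg
          (mul_nonneg (Real.exp_nonneg _) (Real.exp_nonneg _)) (Real.rpow_nonneg hs.1.le _))]
        have h1 : Real.exp (-(lami * (T - s))) * Real.exp (-(lam * s)) ≤ 1 := by
          rw [← Real.exp_add]
          exact Real.exp_le_one_iff.mpr (by nlinarith [hs.1, hs.2])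
        calc _ ≤ 1 * s ^ (-(1/2 : ℝ)) :=
              mul_le_mul_of_nonneg_right h1 (Real.rpow_nonneg hs.1.le _)
        _ = _ := one_mul _
    have step1 : (∫ s in Ioc (0:ℝ) T,
          Real.exp (-(lami * (T - s))) * Real.exp (-(lam * s)) * s ^ (-(1/2 : ℝ)))
        ≤ ∫ s in Ioc (0:ℝ) T, E * (f s * g s) := by
      refine setIntegral_mono_on hlhsint (hfgint.const_mul E) measurableSet_Ioc ?_
      intro s hs
      have hexp : Real.exp (-(lami * (T - s))) * Real.exp (-(lam * s))
          ≤ E * (Real.exp (-(lam * s) / 2) * Real.exp (-(lami * (T - s)) / 2)) := by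
        rw [hE, ← Real.exp_add, ← Real.exp_add, ← Real.exp_add]
        refine Real.exp_le_exp.mpr ?_
        nlinarith [mul_nonneg (sub_nonneg.mpr hli) (sub_nonneg.mpr hs.2)]
      have : E * (f s * g s)
          = E * (Real.exp (-(lam * s) / 2) * Real.exp (-(lami * (T - s)) / 2))
            * s ^ (-(1/2 : ℝ)) := by rw [hf_def, hg_def]; ring
      rw [this]
      exact mul_le_mul_of_nonneg_right hexp (Real.rpow_nonneg hs.1.le _)
    have step2 : (∫ s in Ioc (0:ℝ) T, E * (f s * g s)) = E * ∫ s, f s * g s ∂μ := by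
      rw [hμ]; exact integral_const_mul _ _
    have step3 : (∫ s, f s * g s ∂μ) ≤ (1/T) * (IF * IG) := by
      have h' : (∫ s, f s * g s ∂μ) * T ≤ IF * IG := by linarith [hfkg]
      calc (∫ s, f s * g s ∂μ) ≤ IF * IG / T := (le_div_iff₀ hT).mpr h'
        _ = (1/T) * (IF * IG) := by ring
    calc (∫ s in Ioc (0:ℝ) T,
          Real.exp (-(lami * (T - s))) * Real.exp (-(lam * s)) * s ^ (-(1/2 : ℝ)))
        ≤ ∫ s in Ioc (0:ℝ) T, E * (f s * g s) := step1
      _ = E * ∫ s, f s * g s ∂μ := step2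
      _ ≤ E * ((1/T) * (IF * IG)) :=
          mul_le_mul_of_nonneg_left step3 (Real.exp_nonneg _)
      _ = E * IG * ((1/T) * IF) := by ring
  -- IG ≤ 2/lami
  have hIGle : IG ≤ 2 / lami := by
    have hconv : IG = ∫ s in (0:ℝ)..T, g s := by
      rw [hIG, hμ, intervalIntegral.integral_of_le hT.le]
    have hderiv : ∀ s ∈ uIcc (0:ℝ) T,
        HasDerivAt (fun u => (2/lami) * Real.exp (-(lami * (T - u)) / 2)) (g s) s := by
      intro s _
      have h0 : HasDerivAt (fun u : ℝ => -(lami * (T - u)) / 2) (lami / 2) s := by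
        have e : (fun u : ℝ => -(lami * (T - u)) / 2) = fun u => (lami/2) * u - lami * T / 2 := by
          funext u; ring
        rw [e]
        simpa using ((hasDerivAt_id s).const_mul (lami/2)).sub_const (lami * T / 2)
      have h1 := (h0.exp).const_mul (2/lami)
      have e2 : (2/lami) * (Real.exp (-(lami * (T - s)) / 2) * (lami/2)) = g s := by
        rw [hg_def]; field_simp
      rw [e2] at h1
      exact h1
    have hgiint : IntervalIntegrable g volume 0 T := hgcont.intervalIntegrable _ _
    have := intervalIntegral.integral_eq_sub_of_hasDerivAt hderiv hgiint
    rw [hconv, this]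
    have h0 : (0:ℝ) ≤ (2/lami) * Real.exp (-(lami * (T - 0)) / 2) := by positivity
    have h1 : (2/lami) * Real.exp (-(lami * (T - T)) / 2) = 2/lami := by
      simp
    linarith
  -- IF ≤ 2 * T^(1/2)
  have hIFle : IF ≤ 2 * T ^ ((1:ℝ)/2) := by
    have step : IF ≤ ∫ s in Ioc (0:ℝ) T, s ^ (-(1/2 : ℝ)) := by
      rw [hIF, hμ]
      exact setIntegral_mono_on hfint hroot measurableSet_Ioc hfle
    have hval : (∫ s in Ioc (0:ℝ) T, s ^ (-(1/2 : ℝ))) = 2 * T ^ ((1:ℝ)/2) := by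
      rw [← intervalIntegral.integral_of_le hT.le,
        integral_rpow (Or.inl (by norm_num))]
      rw [Real.zero_rpow (by norm_num)]
      norm_num
      ring
    linarith [step, hval.le]
  exact ⟨part1, hIGle, hIGnn, hIFle, hIFnn⟩


/-- FKG-type estimate: for `λ_i ≥ λ > 0` and `T > 0`,
`∫₀^T e^{-λ_i(T-s)} e^{-λ s} s^{-1/2} ds
  ≤ e^{-λT/2} (∫₀^T e^{-λ_i(T-s)/2} ds) (1/T) ∫₀^T s^{-1/2} e^{-λ s/2} ds`,
and consequently there is `c > 0` (depending only on `λ`) with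
`∫₀^T e^{-λ_i(T-s)} e^{-λ s} s^{-1/2} ds ≤ (c/λ_i) e^{-λT/2} T^{-1/2}`. -/
theorem stmt3 (lam : ℝ) (hlam : 0 < lam) :
    (∀ lami T : ℝ, lam ≤ lami → 0 < T →
      (∫ s in Ioc (0:ℝ) T,
          Real.exp (-(lami * (T - s))) * Real.exp (-(lam * s)) * s ^ (-(1/2 : ℝ)))
        ≤ Real.exp (-(lam * T) / 2) *
            (∫ s in Ioc (0:ℝ) T, Real.exp (-(lami * (T - s)) / 2)) *
            ((1/T) * ∫ s in Ioc (0:ℝ) T, s ^ (-(1/2 : ℝ)) * Real.exp (-(lam * s) / 2)))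
    ∧ ∃ c : ℝ, 0 < c ∧ ∀ lami T : ℝ, lam ≤ lami → 0 < T →
      (∫ s in Ioc (0:ℝ) T,
          Real.exp (-(lami * (T - s))) * Real.exp (-(lam * s)) * s ^ (-(1/2 : ℝ)))
        ≤ (c / lami) * Real.exp (-(lam * T) / 2) * T ^ (-(1/2 : ℝ)) := by
  constructor
  · intro lami T hli hT
    exact (key lam lami T hlam hli hT).1
  · refine ⟨4, by norm_num, ?_⟩
    intro lami T hli hT
    obtain ⟨p1, hIGle, hIGnn, hIFle, hIFnn⟩ := key lam lami T hlam hli hT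
    have hlami : 0 < lami := lt_of_lt_of_le hlam hli
    have hpow : (1/T) * (2 * T ^ ((1:ℝ)/2)) = 2 * T ^ (-(1/2 : ℝ)) := by
      rw [show (-(1/2:ℝ)) = (1/2:ℝ) + (-1:ℝ) by norm_num, Real.rpow_add hT,
        Real.rpow_neg_one]
      field_simp
    calc (∫ s in Ioc (0:ℝ) T,
          Real.exp (-(lami * (T - s))) * Real.exp (-(lam * s)) * s ^ (-(1/2 : ℝ)))
        ≤ Real.exp (-(lam * T) / 2) *
            (∫ s in Ioc (0:ℝ) T, Real.exp (-(lami * (T - s)) / 2)) *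
            ((1/T) * ∫ s in Ioc (0:ℝ) T, s ^ (-(1/2 : ℝ)) * Real.exp (-(lam * s) / 2)) := p1
      _ ≤ Real.exp (-(lam * T) / 2) * (2 / lami) * ((1/T) * (2 * T ^ ((1:ℝ)/2))) := by
          apply mul_le_mul
          · exact mul_le_mul_of_nonneg_left hIGle (Real.exp_nonneg _)
          · exact mul_le_mul_of_nonneg_left hIFle (by positivity)
          · exact mul_nonneg (by positivity) hIFnn
          · positivity
      _ = (4 / lami) * Real.exp (-(lam * T) / 2) * T ^ (-(1/2 : ℝ)) := by
          rw [hpow]; ring
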